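/- arXiv:1205.1193 — 3 statements merged into one kernel-verified Lean document; each statement's English description precedes it below -/
import Mathlib

section
/- Let n ≥ 2 and 1 ≤ d ≤ n−1 be integers. There exists a constant C > 0 such that for every measurable set E ⊆ (0,1) and every θ ∈ (0, π/2), (cos θ)^{2−d} ∫_0^{cos θ} χ_E(u) (cos²θ − u²)^{(d−2)/2} du ≤ C (∫_0^1 χ_E(u) (1−u²)^{(n−2)/2} du)^{d/n}. -/
open MeasureTheory Set Real
open scoped ENNReal
set_option maxHeartbeats 2000000

private lemma split_lintegral (f : ℝ → ℝ≥0∞) (S A : Set ℝ) (hA : MeasurableSet A) :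
    ∫⁻ u in S, f u = (∫⁻ u in A ∩ S, f u) + ∫⁻ u in Aᶜ ∩ S, f u := by
  rw [← Measure.restrict_restrict hA, ← Measure.restrict_restrict hA.compl]
  exact (lintegral_add_compl f hA (μ := volume.restrict S)).symm

private lemma piece_const_bound {P : Set ℝ} (hP : MeasurableSet P) {f : ℝ → ℝ} {K V : ℝ}
    (hK : 0 ≤ K) (hfK : ∀ u ∈ P, f u ≤ K) (hV : volume P ≤ ENNReal.ofReal V) :
    ∫⁻ u in P, ENNReal.ofReal (f u) ≤ ENNReal.ofReal (K * V) := by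
  calc ∫⁻ u in P, ENNReal.ofReal (f u) ≤ ∫⁻ _ in P, ENNReal.ofReal K :=
        setLIntegral_mono' hP fun u hu => ENNReal.ofReal_le_ofReal (hfK u hu)
    _ = ENNReal.ofReal K * volume P := setLIntegral_const _ _
    _ ≤ ENNReal.ofReal K * ENNReal.ofReal V := mul_le_mul_right hV _
    _ = ENNReal.ofReal (K * V) := (ENNReal.ofReal_mul hK).symm

private lemma piece_density_bound {P E : Set ℝ} (hP : MeasurableSet P) (hPE : P ⊆ E)
    {f : ℝ → ℝ} {K b : ℝ} (hK : 0 ≤ K) (hfK : ∀ u ∈ P, f u ≤ K * (1 - u ^ 2) ^ b) :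
    ∫⁻ u in P, ENNReal.ofReal (f u) ≤
      ENNReal.ofReal K * ∫⁻ u in E, ENNReal.ofReal ((1 - u ^ 2) ^ b) := by
  calc ∫⁻ u in P, ENNReal.ofReal (f u)
      ≤ ∫⁻ u in P, ENNReal.ofReal K * ENNReal.ofReal ((1 - u ^ 2) ^ b) :=
        setLIntegral_mono' hP fun u hu => by
          rw [← ENNReal.ofReal_mul hK]; exact ENNReal.ofReal_le_ofReal (hfK u hu)
    _ = ENNReal.ofReal K * ∫⁻ u in P, ENNReal.ofReal ((1 - u ^ 2) ^ b) :=
        lintegral_const_mul' _ _ ENNReal.ofReal_ne_top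
    _ ≤ _ := mul_le_mul_right (lintegral_mono_set hPE) _

private lemma sing_integral {c T : ℝ} (hT : 0 < T) :
    ∫⁻ u in Set.Ico (c - T) c, ENNReal.ofReal ((c - u) ^ (-(1 / 2) : ℝ)) ≤
      ENNReal.ofReal (2 * T ^ ((1 / 2) : ℝ)) := by
  have hle : c - T ≤ c := by linarith
  have h1 : IntervalIntegrable (fun x : ℝ => x ^ (-(1 / 2) : ℝ)) volume 0 T :=
    intervalIntegral.intervalIntegrable_rpow' (by norm_num)
  have h2 : IntervalIntegrable (fun x : ℝ => (c - x) ^ (-(1 / 2) : ℝ)) volume (c - T) c := by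
    simpa using (h1.comp_sub_left c).symm
  have h3 : IntegrableOn (fun x : ℝ => (c - x) ^ (-(1 / 2) : ℝ)) (Ioc (c - T) c) volume :=
    (intervalIntegrable_iff_integrableOn_Ioc_of_le hle).1 h2
  have h4 : ∫⁻ u in Set.Ico (c - T) c, ENNReal.ofReal ((c - u) ^ (-(1 / 2) : ℝ)) =
      ∫⁻ u in Set.Ioc (c - T) c, ENNReal.ofReal ((c - u) ^ (-(1 / 2) : ℝ)) :=
    setLIntegral_congr Ico_ae_eq_Ioc
  have h5 : ∫⁻ u in Set.Ioc (c - T) c, ENNReal.ofReal ((c - u) ^ (-(1 / 2) : ℝ)) =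
      ENNReal.ofReal (∫ u in Set.Ioc (c - T) c, (c - u) ^ (-(1 / 2) : ℝ)) := by
    rw [← ofReal_integral_eq_lintegral_ofReal h3]
    exact (ae_restrict_iff' measurableSet_Ioc).2 (Filter.Eventually.of_forall fun u hu =>
      Real.rpow_nonneg (by linarith [hu.2]) _)
  have h6 : (∫ u in Set.Ioc (c - T) c, (c - u) ^ (-(1 / 2) : ℝ)) =
      ∫ u in (c - T)..c, (c - u) ^ (-(1 / 2) : ℝ) := (intervalIntegral.integral_of_le hle).symm
  have h7 : (∫ u in (c - T)..c, (c - u) ^ (-(1 / 2) : ℝ)) = ∫ x in (0:ℝ)..T, x ^ (-(1 / 2) : ℝ) := by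
    rw [intervalIntegral.integral_comp_sub_left (fun x : ℝ => x ^ (-(1 / 2) : ℝ)) c]
    norm_num
  have h8 : (∫ x in (0:ℝ)..T, x ^ (-(1 / 2) : ℝ)) = 2 * T ^ ((1 / 2) : ℝ) := by
    rw [integral_rpow (Or.inl (by norm_num))]
    rw [Real.zero_rpow (by norm_num)]
    ring
  rw [h4, h5, h6, h7, h8]

/-- Endpoint estimate on indicators for the Abel transform associated with the
`d`-dimensional totally geodesic Radon transform of even radial functions on `Sⁿ`:
for `n ≥ 2`, `1 ≤ d ≤ n−1` there is `C > 0` such that for every measurable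
`E ⊆ (0,1)` and every `θ ∈ (0, π/2)`,
`(cos θ)^{2−d} ∫_0^{cos θ} χ_E(u)(cos²θ − u²)^{(d−2)/2} du
  ≤ C (∫_0^1 χ_E(u)(1−u²)^{(n−2)/2} du)^{d/n}`. -/
theorem abel_sphere_indicator_endpoint (n d : ℕ) (hn : 2 ≤ n) (hd : 1 ≤ d)
    (hdn : d ≤ n - 1) :
    ∃ C : ℝ, 0 < C ∧ ∀ E : Set ℝ, MeasurableSet E → E ⊆ Set.Ioo 0 1 →
      ∀ θ : ℝ, 0 < θ → θ < Real.pi / 2 →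
        ENNReal.ofReal (Real.cos θ ^ ((2 : ℝ) - d)) *
            (∫⁻ u in E ∩ Set.Ioo 0 (Real.cos θ),
              ENNReal.ofReal ((Real.cos θ ^ 2 - u ^ 2) ^ (((d : ℝ) - 2) / 2))) ≤
          ENNReal.ofReal C *
            (∫⁻ u in E, ENNReal.ofReal ((1 - u ^ 2) ^ (((n : ℝ) - 2) / 2)))
              ^ ((d : ℝ) / n) := by
  have hn2 : (2 : ℝ) ≤ (n : ℝ) := by exact_mod_cast hn
  have hd1 : (1 : ℝ) ≤ (d : ℝ) := by exact_mod_cast hd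
  have hdn1 : d + 1 ≤ n := by omega
  have hdnr : (d : ℝ) + 1 ≤ (n : ℝ) := by exact_mod_cast hdn1
  have hnpos : (0 : ℝ) < (n : ℝ) := by linarith
  refine ⟨2 ^ (n + 2) + 4, by positivity, ?_⟩
  intro E hE hE1 θ hθ0 hθ2
  have hπ : 0 < Real.pi := Real.pi_pos
  set c : ℝ := Real.cos θ with hcdef
  have hc0 : 0 < c := Real.cos_pos_of_mem_Ioo ⟨by linarith, hθ2⟩
  have hc1 : c < 1 := by
    have h := Real.cos_lt_cos_of_nonneg_of_le_pi le_rfl (by linarith) hθ0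
    simpa [hcdef] using h
  set a : ℝ := 1 - c with hadef
  have ha0 : 0 < a := by rw [hadef]; linarith
  set b : ℝ := ((n : ℝ) - 2) / 2 with hbdef
  have hb0 : 0 ≤ b := by rw [hbdef]; linarith
  set e : ℝ := ((d : ℝ) - 2) / 2 with hedef
  have heb : e - b = ((d : ℝ) - (n : ℝ)) / 2 := by rw [hedef, hbdef]; ring
  have hebneg : e - b ≤ 0 := by rw [heb]; linarith
  set m : ℝ≥0∞ := ∫⁻ u in E, ENNReal.ofReal ((1 - u ^ 2) ^ b) with hmdef
  set S : Set ℝ := E ∩ Set.Ioo 0 c with hSdef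
  have hS : MeasurableSet S := hE.inter measurableSet_Ioo
  have hSfacts : ∀ u ∈ S, 0 < u ∧ u < c ∧ u < 1 :=
    fun u hu => ⟨hu.2.1, hu.2.2, (hE1 hu.1).2⟩
  have hmeasρ : Measurable fun u : ℝ => ENNReal.ofReal ((1 - u ^ 2) ^ b) :=
    ((Real.continuous_rpow_const hb0).measurable.comp
      (measurable_const.sub (measurable_id.pow_const 2))).ennreal_ofReal
  have hm1 : m ≤ 1 := by
    calc m ≤ ∫⁻ _ in E, 1 := setLIntegral_mono' hE fun u hu => by
          have h1 := hE1 hu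
          exact ENNReal.ofReal_le_one.2
            (Real.rpow_le_one (by nlinarith [h1.1, h1.2]) (by nlinarith [h1.1, h1.2]) hb0)
      _ = volume E := setLIntegral_one E
      _ ≤ volume (Set.Ioo (0:ℝ) 1) := measure_mono hE1
      _ = 1 := by simp
  rcases eq_or_ne m 0 with hm0 | hm0
  · -- degenerate case : E is null
    have hE0 : volume E = 0 := by
      have h0 := (lintegral_eq_zero_iff hmeasρ).1 hm0
      have h1 : ∀ᵐ u ∂volume, u ∈ E → ENNReal.ofReal ((1 - u ^ 2) ^ b) = 0 :=
        (ae_restrict_iff' hE).1 (by filter_upwards [h0] with u hu using hu)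
      refine measure_mono_null (fun u hu => ?_) (ae_iff.1 h1)
      intro hcontra
      have h2 := hcontra hu
      have hu1 := hE1 hu
      have h3 : (0:ℝ) < (1 - u ^ 2) ^ b :=
        Real.rpow_pos_of_pos (by nlinarith [hu1.1, hu1.2]) _
      rw [ENNReal.ofReal_eq_zero] at h2
      linarith
    have hS0 : volume S = 0 := measure_mono_null Set.inter_subset_left hE0
    rw [Measure.restrict_eq_zero.2 hS0, lintegral_zero_measure, mul_zero]
    exact zero_le
  have hmtop : m ≠ ⊤ := (lt_of_le_of_lt hm1 ENNReal.one_lt_top).ne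
  set M : ℝ := m.toReal with hMdef
  have hM0 : 0 < M := ENNReal.toReal_pos hm0 hmtop
  have hM1 : M ≤ 1 := by
    have := ENNReal.toReal_mono ENNReal.one_ne_top hm1
    simpa using this
  have hmM : m = ENNReal.ofReal M := (ENNReal.ofReal_toReal hmtop).symm
  rw [hmM, ENNReal.ofReal_rpow_of_pos hM0, ← ENNReal.ofReal_mul (by positivity)]
  set g : ℝ → ℝ := fun u => c ^ ((2:ℝ) - (d:ℝ)) * (c ^ 2 - u ^ 2) ^ e with hgdef
  have hfold : ENNReal.ofReal (c ^ ((2:ℝ) - (d:ℝ))) *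
      (∫⁻ u in S, ENNReal.ofReal ((c ^ 2 - u ^ 2) ^ e)) = ∫⁻ u in S, ENNReal.ofReal (g u) := by
    rw [← lintegral_const_mul' _ _ ENNReal.ofReal_ne_top]
    exact lintegral_congr fun u => (ENNReal.ofReal_mul (Real.rpow_nonneg hc0.le _)).symm
  rw [hfold]
  have hab : (0:ℝ) < a ^ b := Real.rpow_pos_of_pos ha0 b
  have hvolS : volume S ≤ ENNReal.ofReal (M / a ^ b) := by
    have h1 : ENNReal.ofReal (a ^ b) * volume S ≤ m := by
      calc ENNReal.ofReal (a ^ b) * volume S = ∫⁻ _ in S, ENNReal.ofReal (a ^ b) :=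
            (setLIntegral_const S _).symm
        _ ≤ ∫⁻ u in S, ENNReal.ofReal ((1 - u ^ 2) ^ b) := by
            refine setLIntegral_mono' hS fun u hu => ?_
            obtain ⟨hu0, huc, hu1⟩ := hSfacts u hu
            exact ENNReal.ofReal_le_ofReal
              (Real.rpow_le_rpow ha0.le (by nlinarith [mul_pos hu0 (sub_pos.2 hu1)]) hb0)
        _ ≤ m := lintegral_mono_set Set.inter_subset_left
    have h2 : volume S ≤ m / ENNReal.ofReal (a ^ b) :=
      (ENNReal.le_div_iff_mul_le (Or.inl (ENNReal.ofReal_pos.2 hab).ne')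
        (Or.inl ENNReal.ofReal_ne_top)).2 (by rwa [mul_comm])
    rwa [hmM, ← ENNReal.ofReal_div_of_pos hab] at h2
  have key1 : ∀ τ : ℝ, M ^ ((2:ℝ)/(n:ℝ)) ≤ τ →
      τ ^ (((d:ℝ) - (n:ℝ))/2) * M ≤ M ^ ((d:ℝ)/(n:ℝ)) := by
    intro τ hτ
    have hM2n : (0:ℝ) < M ^ ((2:ℝ)/(n:ℝ)) := Real.rpow_pos_of_pos hM0 _
    have h1 : τ ^ (((d:ℝ) - (n:ℝ))/2) ≤ (M ^ ((2:ℝ)/(n:ℝ))) ^ (((d:ℝ) - (n:ℝ))/2) :=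
      Real.rpow_le_rpow_of_nonpos hM2n hτ (by linarith)
    have h2 : (M ^ ((2:ℝ)/(n:ℝ))) ^ (((d:ℝ) - (n:ℝ))/2) = M ^ (((d:ℝ) - (n:ℝ))/(n:ℝ)) := by
      rw [← Real.rpow_mul hM0.le]
      congr 1
      field_simp
    have h3 : M ^ (((d:ℝ) - (n:ℝ))/(n:ℝ)) * M = M ^ ((d:ℝ)/(n:ℝ)) := by
      rw [← Real.rpow_add_one hM0.ne']
      congr 1
      field_simp
      ring
    calc τ ^ (((d:ℝ) - (n:ℝ))/2) * M ≤ M ^ (((d:ℝ) - (n:ℝ))/(n:ℝ)) * M :=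
          mul_le_mul_of_nonneg_right (h1.trans h2.le) hM0.le
      _ = M ^ ((d:ℝ)/(n:ℝ)) := h3
  have hMdn0 : (0:ℝ) ≤ M ^ ((d:ℝ)/(n:ℝ)) := Real.rpow_nonneg hM0.le _
  have hM2n0 : (0:ℝ) < M ^ ((2:ℝ)/(n:ℝ)) := Real.rpow_pos_of_pos hM0 _

  rcases eq_or_lt_of_le hd with hdeq | hd2
  · -- d = 1
    have hdc : (d:ℝ) = 1 := by rw [← hdeq]; norm_num
    have he : e = -(1/2 : ℝ) := by rw [hedef, hdc]; norm_num
    have hexp1 : -(1/2 : ℝ) - b = ((d:ℝ) - (n:ℝ))/2 := by rw [hbdef, hdc]; ring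
    have hgP2 : ∀ u ∈ S, g u ≤ (c - u) ^ (-(1/2) : ℝ) := by
      intro u hu
      obtain ⟨hu0, huc, hu1⟩ := hSfacts u hu
      have hcu : (0:ℝ) < c - u := by linarith
      have h1 : (c ^ 2 - u ^ 2) ^ e = (c - u) ^ (-(1/2):ℝ) * (c + u) ^ (-(1/2):ℝ) := by
        rw [he, show c ^ 2 - u ^ 2 = (c - u) * (c + u) by ring,
          Real.mul_rpow hcu.le (by linarith)]
      have h2 : (c + u) ^ (-(1/2):ℝ) ≤ c ^ (-(1/2):ℝ) :=
        Real.rpow_le_rpow_of_nonpos hc0 (by linarith) (by norm_num)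
      have h3 : c * c ^ (-(1/2):ℝ) = c ^ ((1/2):ℝ) := by
        nth_rewrite 1 [← Real.rpow_one c]
        rw [← Real.rpow_add hc0]
        norm_num
      have h4 : c ^ ((1/2):ℝ) ≤ 1 := Real.rpow_le_one hc0.le hc1.le (by norm_num)
      have h5 : c ^ ((2:ℝ) - (d:ℝ)) = c := by rw [hdc]; norm_num
      calc g u = c * ((c - u) ^ (-(1/2):ℝ) * (c + u) ^ (-(1/2):ℝ)) := by
            simp only [hgdef]
            rw [h5, h1]
        _ ≤ c * ((c - u) ^ (-(1/2):ℝ) * c ^ (-(1/2):ℝ)) := by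
            refine mul_le_mul_of_nonneg_left ?_ hc0.le
            exact mul_le_mul_of_nonneg_left h2 (Real.rpow_nonneg hcu.le _)
        _ = (c * c ^ (-(1/2):ℝ)) * (c - u) ^ (-(1/2):ℝ) := by ring
        _ ≤ 1 * (c - u) ^ (-(1/2):ℝ) := by
            refine mul_le_mul_of_nonneg_right ?_ (Real.rpow_nonneg hcu.le _)
            rw [h3]; exact h4
        _ = (c - u) ^ (-(1/2):ℝ) := one_mul _
    have hfarB : ∀ τ : ℝ, 0 < τ → M ^ ((2:ℝ)/(n:ℝ)) ≤ τ →
        (∫⁻ u in Set.Iio (c - τ) ∩ S, ENNReal.ofReal (g u)) ≤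
          ENNReal.ofReal (M ^ ((d:ℝ)/(n:ℝ))) := by
      intro τ hτ0 hτM
      have hP : ∀ u ∈ Set.Iio (c - τ) ∩ S,
          g u ≤ τ ^ (((d:ℝ) - (n:ℝ))/2) * (1 - u ^ 2) ^ b := by
        intro u hu
        obtain ⟨huio, huS⟩ := hu
        obtain ⟨hu0, huc, hu1⟩ := hSfacts u huS
        have huio' : u < c - τ := huio
        have hcu : (0:ℝ) < c - u := by linarith
        have h1 : (c - u) ^ (-(1/2):ℝ) = (c - u) ^ (-(1/2:ℝ) - b) * (c - u) ^ b := by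
          rw [← Real.rpow_add hcu]
          congr 1
          ring
        have h2 : (c - u) ^ (-(1/2:ℝ) - b) ≤ τ ^ (-(1/2:ℝ) - b) :=
          Real.rpow_le_rpow_of_nonpos hτ0 (by linarith) (by rw [hexp1]; linarith)
        have h3 : (c - u) ^ b ≤ (1 - u ^ 2) ^ b :=
          Real.rpow_le_rpow hcu.le (by nlinarith) hb0
        calc g u ≤ (c - u) ^ (-(1/2):ℝ) := hgP2 u huS
          _ = (c - u) ^ (-(1/2:ℝ) - b) * (c - u) ^ b := h1
          _ ≤ τ ^ (-(1/2:ℝ) - b) * (1 - u ^ 2) ^ b :=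
              mul_le_mul h2 h3 (Real.rpow_nonneg hcu.le _) (Real.rpow_nonneg hτ0.le _)
          _ = τ ^ (((d:ℝ) - (n:ℝ))/2) * (1 - u ^ 2) ^ b := by rw [← hexp1]
      have h6 := piece_density_bound (measurableSet_Iio.inter hS)
        (Set.inter_subset_right.trans Set.inter_subset_left)
        (Real.rpow_nonneg hτ0.le _) hP
      refine h6.trans ?_
      rw [← hmdef, hmM, ← ENNReal.ofReal_mul (Real.rpow_nonneg hτ0.le _)]
      exact ENNReal.ofReal_le_ofReal (key1 τ hτM)
    have hnearB : ∀ T : ℝ, 0 < T → ∀ P : Set ℝ, MeasurableSet P →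
        P ⊆ (Set.Iio (c - T))ᶜ ∩ S →
        (∫⁻ u in P, ENNReal.ofReal (g u)) ≤ ENNReal.ofReal (2 * T ^ ((1/2):ℝ)) := by
      intro T hT P hPmeas hPsub
      calc (∫⁻ u in P, ENNReal.ofReal (g u))
          ≤ ∫⁻ u in P, ENNReal.ofReal ((c - u) ^ (-(1/2):ℝ)) :=
            setLIntegral_mono' hPmeas fun u hu =>
              ENNReal.ofReal_le_ofReal (hgP2 u (hPsub hu).2)
        _ ≤ ∫⁻ u in Set.Ico (c - T) c, ENNReal.ofReal ((c - u) ^ (-(1/2):ℝ)) := by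
            refine lintegral_mono_set fun u hu => ?_
            obtain ⟨hu1, hu2⟩ := hPsub hu
            rw [Set.compl_Iio] at hu1
            exact ⟨hu1, hu2.2.2⟩
        _ ≤ ENNReal.ofReal (2 * T ^ ((1/2):ℝ)) := sing_integral hT
    have hfinal : ∀ X : ℝ, X ≤ 4 * M ^ ((d:ℝ)/(n:ℝ)) →
        ENNReal.ofReal X ≤ ENNReal.ofReal ((2 ^ (n + 2) + 4) * M ^ ((d:ℝ)/(n:ℝ))) := by
      intro X hX
      refine ENNReal.ofReal_le_ofReal (hX.trans ?_)
      have h2n : (0:ℝ) < 2 ^ (n + 2) := by positivity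
      nlinarith [hMdn0]
    have hcast1 : M ^ ((1:ℝ)/(n:ℝ)) = M ^ ((d:ℝ)/(n:ℝ)) := by rw [hdc]
    rcases le_total a (M ^ ((2:ℝ)/(n:ℝ))) with hcase | hcase
    · -- a ≤ M^{2/n} : one split at τ = M^{2/n}
      set τ : ℝ := M ^ ((2:ℝ)/(n:ℝ)) with hτdef
      rw [split_lintegral (fun u => ENNReal.ofReal (g u)) S (Set.Iio (c - τ)) measurableSet_Iio]
      have hτhalf : τ ^ ((1/2):ℝ) = M ^ ((1:ℝ)/(n:ℝ)) := by
        rw [hτdef, ← Real.rpow_mul hM0.le]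
        congr 1
        field_simp
      have h7 := hnearB τ hM2n0 ((Set.Iio (c - τ))ᶜ ∩ S)
        (measurableSet_Iio.compl.inter hS) (fun u hu => hu)
      calc (∫⁻ u in Set.Iio (c - τ) ∩ S, ENNReal.ofReal (g u)) +
            ∫⁻ u in (Set.Iio (c - τ))ᶜ ∩ S, ENNReal.ofReal (g u)
          ≤ ENNReal.ofReal (M ^ ((d:ℝ)/(n:ℝ))) + ENNReal.ofReal (2 * τ ^ ((1/2):ℝ)) :=
            add_le_add (hfarB τ hM2n0 le_rfl) h7
        _ = ENNReal.ofReal (M ^ ((d:ℝ)/(n:ℝ)) + 2 * τ ^ ((1/2):ℝ)) :=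
            (ENNReal.ofReal_add hMdn0 (by positivity)).symm
        _ ≤ ENNReal.ofReal ((2 ^ (n + 2) + 4) * M ^ ((d:ℝ)/(n:ℝ))) := by
            refine hfinal _ ?_
            rw [hτhalf, hcast1]
            linarith [hMdn0]
    · -- M^{2/n} ≤ a : split at a and at L = M / a^b
      set L : ℝ := M / a ^ b with hLdef
      have hL0 : 0 < L := div_pos hM0 hab
      have hLM : L ≤ M ^ ((2:ℝ)/(n:ℝ)) := by
        rw [hLdef, div_le_iff₀ hab]
        have h1 : M ^ ((2:ℝ)/(n:ℝ)) * (M ^ ((2:ℝ)/(n:ℝ))) ^ b = M := by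
          rw [← Real.rpow_mul hM0.le, ← Real.rpow_add hM0]
          nth_rewrite 2 [← Real.rpow_one M]
          congr 1
          rw [hbdef]
          field_simp
          ring
        calc M = M ^ ((2:ℝ)/(n:ℝ)) * (M ^ ((2:ℝ)/(n:ℝ))) ^ b := h1.symm
          _ ≤ M ^ ((2:ℝ)/(n:ℝ)) * a ^ b :=
              mul_le_mul_of_nonneg_left (Real.rpow_le_rpow hM2n0.le hcase hb0) hM2n0.le
      have hLhalf : L ^ ((1/2):ℝ) ≤ M ^ ((d:ℝ)/(n:ℝ)) := by
        have h1 : L ^ ((1/2):ℝ) ≤ (M ^ ((2:ℝ)/(n:ℝ))) ^ ((1/2):ℝ) :=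
          Real.rpow_le_rpow hL0.le hLM (by norm_num)
        have h2 : (M ^ ((2:ℝ)/(n:ℝ))) ^ ((1/2):ℝ) = M ^ ((1:ℝ)/(n:ℝ)) := by
          rw [← Real.rpow_mul hM0.le]
          congr 1
          field_simp
        rw [← hcast1, ← h2]
        exact h1
      rw [split_lintegral (fun u => ENNReal.ofReal (g u)) S (Set.Iio (c - a)) measurableSet_Iio,
        split_lintegral (fun u => ENNReal.ofReal (g u)) ((Set.Iio (c - a))ᶜ ∩ S)
          (Set.Iio (c - L)) measurableSet_Iio]
      have hmidP : ∀ u ∈ Set.Iio (c - L) ∩ ((Set.Iio (c - a))ᶜ ∩ S),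
          g u ≤ L ^ (-(1/2):ℝ) := by
        intro u hu
        obtain ⟨hu1, hu2, hu3⟩ := hu
        have huL : u < c - L := hu1
        calc g u ≤ (c - u) ^ (-(1/2):ℝ) := hgP2 u hu3
          _ ≤ L ^ (-(1/2):ℝ) :=
              Real.rpow_le_rpow_of_nonpos hL0 (by linarith) (by norm_num)
      have hmidV : volume (Set.Iio (c - L) ∩ ((Set.Iio (c - a))ᶜ ∩ S)) ≤ ENNReal.ofReal L := by
        refine (measure_mono (Set.inter_subset_right.trans Set.inter_subset_right)).trans ?_
        rw [hLdef]
        exact hvolS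
      have hmidB := piece_const_bound
        (measurableSet_Iio.inter (measurableSet_Iio.compl.inter hS))
        (Real.rpow_nonneg hL0.le _) hmidP hmidV
      have hmid2 : L ^ (-(1/2):ℝ) * L = L ^ ((1/2):ℝ) := by
        nth_rewrite 2 [← Real.rpow_one L]
        rw [← Real.rpow_add hL0]
        norm_num
      have hnst := hnearB L hL0 ((Set.Iio (c - L))ᶜ ∩ ((Set.Iio (c - a))ᶜ ∩ S))
        (measurableSet_Iio.compl.inter (measurableSet_Iio.compl.inter hS))
        (fun u hu => ⟨hu.1, hu.2.2⟩)
      calc (∫⁻ u in Set.Iio (c - a) ∩ S, ENNReal.ofReal (g u)) +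
            ((∫⁻ u in Set.Iio (c - L) ∩ ((Set.Iio (c - a))ᶜ ∩ S), ENNReal.ofReal (g u)) +
              ∫⁻ u in (Set.Iio (c - L))ᶜ ∩ ((Set.Iio (c - a))ᶜ ∩ S), ENNReal.ofReal (g u))
          ≤ ENNReal.ofReal (M ^ ((d:ℝ)/(n:ℝ))) +
              (ENNReal.ofReal (L ^ (-(1/2):ℝ) * L) + ENNReal.ofReal (2 * L ^ ((1/2):ℝ))) :=
            add_le_add (hfarB a ha0 hcase) (add_le_add hmidB hnst)
        _ = ENNReal.ofReal (M ^ ((d:ℝ)/(n:ℝ)) + (L ^ (-(1/2):ℝ) * L + 2 * L ^ ((1/2):ℝ))) := by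
            rw [← ENNReal.ofReal_add (mul_nonneg (Real.rpow_nonneg hL0.le _) hL0.le) (by positivity),
              ← ENNReal.ofReal_add hMdn0 (by positivity)]
        _ ≤ ENNReal.ofReal ((2 ^ (n + 2) + 4) * M ^ ((d:ℝ)/(n:ℝ))) := by
            refine hfinal _ ?_
            rw [hmid2]
            linarith [hLhalf, hMdn0]
  · -- 2 ≤ d
    have hd2r : (2:ℝ) ≤ (d:ℝ) := by exact_mod_cast hd2
    have he0 : 0 ≤ e := by rw [hedef]; linarith
    have hg1 : ∀ u ∈ S, g u ≤ 1 := by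
      intro u hu
      obtain ⟨hu0, huc, hu1⟩ := hSfacts u hu
      have hx0 : (0:ℝ) ≤ c ^ 2 - u ^ 2 := by nlinarith
      have h1 : (c ^ 2 - u ^ 2) ^ e ≤ (c ^ 2) ^ e := Real.rpow_le_rpow hx0 (by nlinarith) he0
      have h2 : ((c:ℝ) ^ 2) ^ e = c ^ ((d:ℝ) - 2) := by
        rw [← Real.rpow_natCast c 2, ← Real.rpow_mul hc0.le]
        congr 1
        push_cast
        rw [hedef]
        ring
      have h3 : c ^ ((2:ℝ) - (d:ℝ)) * c ^ ((d:ℝ) - 2) = 1 := by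
        rw [← Real.rpow_add hc0]
        norm_num
      calc g u ≤ c ^ ((2:ℝ) - (d:ℝ)) * (c ^ 2) ^ e := by
            simp only [hgdef]
            exact mul_le_mul_of_nonneg_left h1 (Real.rpow_nonneg hc0.le _)
        _ = 1 := by rw [h2, h3]
    rcases le_total c (1/2 : ℝ) with hc2 | hc2
    · -- c small
      have hbound := piece_const_bound hS zero_le_one hg1 hvolS
      refine hbound.trans (ENNReal.ofReal_le_ofReal ?_)
      rw [one_mul]
      have h2a : (1:ℝ)/2 ≤ a := by rw [hadef]; linarith
      have h1 : ((1:ℝ)/2) ^ b ≤ a ^ b := Real.rpow_le_rpow (by norm_num) h2a hb0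
      have hhalfb : (0:ℝ) < ((1:ℝ)/2) ^ b := Real.rpow_pos_of_pos (by norm_num) _
      have h2 : M / a ^ b ≤ M / ((1:ℝ)/2) ^ b := by gcongr
      have h3 : M / ((1:ℝ)/2) ^ b = M * 2 ^ b := by
        have h2b : (0:ℝ) < 2 ^ b := Real.rpow_pos_of_pos (by norm_num) b
        rw [one_div, Real.inv_rpow (by norm_num : (0:ℝ) ≤ 2)]
        field_simp
      have h4 : M ≤ M ^ ((d:ℝ)/(n:ℝ)) := by
        nth_rewrite 1 [← Real.rpow_one M]
        exact Real.rpow_le_rpow_of_exponent_ge hM0 hM1 (by rw [div_le_one hnpos]; linarith)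
      have h5 : (2:ℝ) ^ b ≤ 2 ^ (n + 2) := by
        rw [← Real.rpow_natCast 2 (n + 2)]
        apply Real.rpow_le_rpow_of_exponent_le one_le_two
        push_cast
        rw [hbdef]
        linarith
      calc M / a ^ b ≤ M / ((1:ℝ)/2) ^ b := h2
        _ = M * 2 ^ b := h3
        _ ≤ M ^ ((d:ℝ)/(n:ℝ)) * 2 ^ (n + 2) :=
            mul_le_mul h4 h5 (Real.rpow_nonneg (by norm_num) _) hMdn0
        _ ≤ (2 ^ (n + 2) + 4) * M ^ ((d:ℝ)/(n:ℝ)) := by nlinarith [hMdn0]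
    · -- c ≥ 1/2
      have hgs : ∀ u ∈ S, g u ≤ 2 ^ ((d:ℝ) - 2) * (c - u) ^ e := by
        intro u hu
        obtain ⟨hu0, huc, hu1⟩ := hSfacts u hu
        have hcu : (0:ℝ) < c - u := by linarith
        have h1 : (c ^ 2 - u ^ 2) ^ e = (c - u) ^ e * (c + u) ^ e := by
          rw [show c ^ 2 - u ^ 2 = (c - u) * (c + u) by ring,
            Real.mul_rpow hcu.le (by linarith)]
        have h2 : (c + u) ^ e ≤ (2 * c) ^ e :=
          Real.rpow_le_rpow (by linarith) (by linarith) he0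
        have h3 : ((2:ℝ) * c) ^ e = 2 ^ e * c ^ e := Real.mul_rpow (by norm_num) hc0.le
        have h4 : c ^ ((2:ℝ) - (d:ℝ)) * c ^ e = c ^ (-e) := by
          rw [← Real.rpow_add hc0]
          congr 1
          rw [hedef]
          ring
        have h5 : c ^ (-e) ≤ 2 ^ e := by
          have h6 : c ^ (-e) ≤ ((1:ℝ)/2) ^ (-e) :=
            Real.rpow_le_rpow_of_nonpos (by norm_num) hc2 (by linarith)
          have h7 : ((1:ℝ)/2) ^ (-e) = 2 ^ e := by
            rw [one_div, Real.inv_rpow (by norm_num : (0:ℝ) ≤ 2),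
              Real.rpow_neg (by norm_num : (0:ℝ) ≤ 2), inv_inv]
          linarith
        have hcue : (0:ℝ) ≤ (c - u) ^ e := Real.rpow_nonneg hcu.le _
        calc g u = c ^ ((2:ℝ) - (d:ℝ)) * ((c - u) ^ e * (c + u) ^ e) := by
              simp only [hgdef]
              rw [h1]
          _ ≤ c ^ ((2:ℝ) - (d:ℝ)) * ((c - u) ^ e * (2 ^ e * c ^ e)) := by
              refine mul_le_mul_of_nonneg_left ?_ (Real.rpow_nonneg hc0.le _)
              exact mul_le_mul_of_nonneg_left (h2.trans h3.le) hcue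
          _ = (c ^ ((2:ℝ) - (d:ℝ)) * c ^ e) * 2 ^ e * (c - u) ^ e := by ring
          _ ≤ 2 ^ e * 2 ^ e * (c - u) ^ e := by
              refine mul_le_mul_of_nonneg_right ?_ hcue
              rw [h4]
              exact mul_le_mul_of_nonneg_right h5 (Real.rpow_nonneg (by norm_num) _)
          _ = 2 ^ ((d:ℝ) - 2) * (c - u) ^ e := by
              rw [← Real.rpow_add (by norm_num : (0:ℝ) < 2)]
              congr 2
              rw [hedef]
              ring
      have main : ∀ τ V : ℝ, 0 < τ → 0 ≤ V →
          volume ((Set.Iio (c - τ))ᶜ ∩ S) ≤ ENNReal.ofReal V →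
          M ^ ((2:ℝ)/(n:ℝ)) ≤ τ →
          2 ^ ((d:ℝ) - 2) * τ ^ e * V ≤ 2 ^ ((d:ℝ) - 2) * M ^ ((d:ℝ)/(n:ℝ)) →
          (∫⁻ u in S, ENNReal.ofReal (g u)) ≤
            ENNReal.ofReal ((2 ^ (n + 2) + 4) * M ^ ((d:ℝ)/(n:ℝ))) := by
        intro τ V hτ0 hV0 hVol hτM hnearR
        rw [split_lintegral (fun u => ENNReal.ofReal (g u)) S (Set.Iio (c - τ)) measurableSet_Iio]
        have hfarP : ∀ u ∈ Set.Iio (c - τ) ∩ S,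
            g u ≤ (2 ^ ((d:ℝ) - 2) * τ ^ (((d:ℝ) - (n:ℝ))/2)) * (1 - u ^ 2) ^ b := by
          intro u hu
          obtain ⟨huio, huS⟩ := hu
          obtain ⟨hu0, huc, hu1⟩ := hSfacts u huS
          have huio' : u < c - τ := huio
          have hcu : (0:ℝ) < c - u := by linarith
          have h1 : (c - u) ^ e = (c - u) ^ (e - b) * (c - u) ^ b := by
            rw [← Real.rpow_add hcu]
            congr 1
            ring
          have h2 : (c - u) ^ (e - b) ≤ τ ^ (e - b) :=
            Real.rpow_le_rpow_of_nonpos hτ0 (by linarith) hebneg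
          have h3 : (c - u) ^ b ≤ (1 - u ^ 2) ^ b :=
            Real.rpow_le_rpow hcu.le (by nlinarith) hb0
          calc g u ≤ 2 ^ ((d:ℝ) - 2) * (c - u) ^ e := hgs u huS
            _ = 2 ^ ((d:ℝ) - 2) * ((c - u) ^ (e - b) * (c - u) ^ b) := by rw [← h1]
            _ ≤ 2 ^ ((d:ℝ) - 2) * (τ ^ (e - b) * (1 - u ^ 2) ^ b) := by
                refine mul_le_mul_of_nonneg_left ?_ (Real.rpow_nonneg (by norm_num) _)
                exact mul_le_mul h2 h3 (Real.rpow_nonneg hcu.le _) (Real.rpow_nonneg hτ0.le _)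
            _ = (2 ^ ((d:ℝ) - 2) * τ ^ (((d:ℝ) - (n:ℝ))/2)) * (1 - u ^ 2) ^ b := by
                rw [← heb]
                ring
        have hK2 : (0:ℝ) ≤ 2 ^ ((d:ℝ) - 2) * τ ^ (((d:ℝ) - (n:ℝ))/2) :=
          mul_nonneg (Real.rpow_nonneg (by norm_num) _) (Real.rpow_nonneg hτ0.le _)
        have hfarB := piece_density_bound (measurableSet_Iio.inter hS)
          (Set.inter_subset_right.trans Set.inter_subset_left) hK2 hfarP
        have hfarB2 : (∫⁻ u in Set.Iio (c - τ) ∩ S, ENNReal.ofReal (g u)) ≤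
            ENNReal.ofReal (2 ^ ((d:ℝ) - 2) * M ^ ((d:ℝ)/(n:ℝ))) := by
          refine hfarB.trans ?_
          rw [← hmdef, hmM, ← ENNReal.ofReal_mul hK2]
          refine ENNReal.ofReal_le_ofReal ?_
          rw [mul_assoc]
          exact mul_le_mul_of_nonneg_left (key1 τ hτM) (Real.rpow_nonneg (by norm_num) _)
        have hnearP : ∀ u ∈ (Set.Iio (c - τ))ᶜ ∩ S, g u ≤ 2 ^ ((d:ℝ) - 2) * τ ^ e := by
          intro u hu
          obtain ⟨huc', huS⟩ := hu
          obtain ⟨hu0, huc, hu1⟩ := hSfacts u huS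
          rw [Set.compl_Iio] at huc'
          have h1 : c - u ≤ τ := by
            have h1' : c - τ ≤ u := huc'
            linarith
          calc g u ≤ 2 ^ ((d:ℝ) - 2) * (c - u) ^ e := hgs u huS
            _ ≤ 2 ^ ((d:ℝ) - 2) * τ ^ e := by
                refine mul_le_mul_of_nonneg_left ?_ (Real.rpow_nonneg (by norm_num) _)
                exact Real.rpow_le_rpow (by linarith) h1 he0
        have hnearB := piece_const_bound (measurableSet_Iio.compl.inter hS)
          (mul_nonneg (Real.rpow_nonneg (by norm_num) _) (Real.rpow_nonneg hτ0.le _)) hnearP hVol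
        have h8 : (2:ℝ) ^ ((d:ℝ) - 2) ≤ 2 ^ (n + 1) := by
          rw [← Real.rpow_natCast 2 (n + 1)]
          apply Real.rpow_le_rpow_of_exponent_le one_le_two
          push_cast
          linarith
        have h9 : (2:ℝ) ^ (n + 1) + 2 ^ (n + 1) ≤ 2 ^ (n + 2) + 4 := by
          have h9' : (2:ℝ) ^ (n + 2) = 2 ^ (n + 1) + 2 ^ (n + 1) := by ring
          linarith
        have hsum : (2:ℝ) ^ ((d:ℝ) - 2) * M ^ ((d:ℝ)/(n:ℝ)) + 2 ^ ((d:ℝ) - 2) * τ ^ e * V ≤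
            (2 ^ (n + 2) + 4) * M ^ ((d:ℝ)/(n:ℝ)) := by
          nlinarith [hnearR, hMdn0, mul_nonneg (sub_nonneg.2 h8) hMdn0,
            mul_le_mul_of_nonneg_right h9 hMdn0]
        calc (∫⁻ u in Set.Iio (c - τ) ∩ S, ENNReal.ofReal (g u)) +
              (∫⁻ u in (Set.Iio (c - τ))ᶜ ∩ S, ENNReal.ofReal (g u))
            ≤ ENNReal.ofReal (2 ^ ((d:ℝ) - 2) * M ^ ((d:ℝ)/(n:ℝ))) +
              ENNReal.ofReal (2 ^ ((d:ℝ) - 2) * τ ^ e * V) := add_le_add hfarB2 hnearB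
          _ = ENNReal.ofReal (2 ^ ((d:ℝ) - 2) * M ^ ((d:ℝ)/(n:ℝ)) +
                2 ^ ((d:ℝ) - 2) * τ ^ e * V) :=
              (ENNReal.ofReal_add (mul_nonneg (Real.rpow_nonneg (by norm_num) _) hMdn0)
                (mul_nonneg (mul_nonneg (Real.rpow_nonneg (by norm_num) _)
                  (Real.rpow_nonneg hτ0.le _)) hV0)).symm
          _ ≤ ENNReal.ofReal ((2 ^ (n + 2) + 4) * M ^ ((d:ℝ)/(n:ℝ))) :=
              ENNReal.ofReal_le_ofReal hsum
      rcases le_total a (M ^ ((2:ℝ)/(n:ℝ))) with hcase | hcase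
      · -- a ≤ M^{2/n}
        set τ : ℝ := M ^ ((2:ℝ)/(n:ℝ)) with hτdef
        refine main τ τ hM2n0 hM2n0.le ?_ le_rfl ?_
        · have hsub : (Set.Iio (c - τ))ᶜ ∩ S ⊆ Set.Ico (c - τ) c := by
            intro u hu
            obtain ⟨hu1, hu2⟩ := hu
            rw [Set.compl_Iio] at hu1
            exact Set.mem_Ico.2 ⟨hu1, (hSfacts u hu2).2.1⟩
          refine (measure_mono hsub).trans ?_
          rw [Real.volume_Ico]
          exact ENNReal.ofReal_le_ofReal (by linarith)
        · have h1 : τ ^ e * τ = M ^ ((d:ℝ)/(n:ℝ)) := by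
            rw [← Real.rpow_add_one hM2n0.ne']
            rw [hτdef, ← Real.rpow_mul hM0.le]
            congr 1
            rw [hedef]
            field_simp
            ring
          rw [mul_assoc, h1]
      · -- M^{2/n} ≤ a
        refine main a (M / a ^ b) ha0 (by positivity) ?_ hcase ?_
        · exact (measure_mono Set.inter_subset_right).trans hvolS
        · rw [mul_assoc]
          refine mul_le_mul_of_nonneg_left ?_ (Real.rpow_nonneg (by norm_num) _)
          have h1 : a ^ e * (M / a ^ b) = a ^ (((d:ℝ) - (n:ℝ))/2) * M := by
            rw [← heb, Real.rpow_sub ha0]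
            field_simp
          rw [h1]
          exact key1 a hcase
end

section
/- Let n ≥ 2 and 1 ≤ d ≤ n−1 be integers. There exists a constant C > 0 such that for every measurable function g : (0,1) → [0,∞], sup_{θ ∈ (0,π/2)} (cos θ)^{2−d} ∫_0^{cos θ} g(u) (cos²θ − u²)^{(d−2)/2} du ≤ C ‖g‖_{L^{n/d,1}((0,1), (1−u²)^{(n−2)/2} du)}. -/
open MeasureTheory Set Real
open scoped ENNReal

lemma layercake_ennreal (ν : Measure ℝ) [SFinite ν] (g : ℝ → ℝ≥0∞) (hg : Measurable g) :
    ∫⁻ u, g u ∂ν = ∫⁻ l in Set.Ioi (0 : ℝ), ν {u | ENNReal.ofReal l < g u} := by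
  have hpt : ∀ a : ℝ≥0∞, ∫⁻ l in Set.Ioi (0 : ℝ),
      Set.indicator {l : ℝ | ENNReal.ofReal l < a} (fun _ => (1 : ℝ≥0∞)) l = a := by
    intro a
    have hms : MeasurableSet {l : ℝ | ENNReal.ofReal l < a} :=
      measurableSet_lt ENNReal.measurable_ofReal measurable_const
    rw [lintegral_indicator hms, Measure.restrict_restrict hms, setLIntegral_one]
    rcases eq_or_ne a ∞ with ha | ha
    · have : {l : ℝ | ENNReal.ofReal l < a} ∩ Set.Ioi 0 = Set.Ioi 0 := by
        ext l; simp [ha, ENNReal.ofReal_lt_top]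
      rw [this, Real.volume_Ioi, ha]
    · have : {l : ℝ | ENNReal.ofReal l < a} ∩ Set.Ioi 0 = Set.Ioo 0 a.toReal := by
        ext l
        simp only [Set.mem_inter_iff, Set.mem_setOf_eq, Set.mem_Ioi, Set.mem_Ioo]
        constructor
        · rintro ⟨h1, h2⟩
          exact ⟨h2, (ENNReal.ofReal_lt_iff_lt_toReal h2.le ha).1 h1⟩
        · rintro ⟨h1, h2⟩
          exact ⟨(ENNReal.ofReal_lt_iff_lt_toReal h1.le ha).2 h2, h1⟩
      rw [this, Real.volume_Ioo, sub_zero, ENNReal.ofReal_toReal ha]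
  have step1 : ∫⁻ u, g u ∂ν = ∫⁻ u, (∫⁻ l in Set.Ioi (0 : ℝ),
      Set.indicator {l : ℝ | ENNReal.ofReal l < g u} (fun _ => (1 : ℝ≥0∞)) l) ∂ν :=
    lintegral_congr fun u => (hpt (g u)).symm
  have hswap : ∫⁻ u, (∫⁻ l in Set.Ioi (0 : ℝ),
      Set.indicator {l : ℝ | ENNReal.ofReal l < g u} (fun _ => (1 : ℝ≥0∞)) l) ∂ν
      = ∫⁻ l in Set.Ioi (0 : ℝ), ∫⁻ u,
      Set.indicator {l : ℝ | ENNReal.ofReal l < g u} (fun _ => (1 : ℝ≥0∞)) l ∂ν := by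
    apply lintegral_lintegral_swap
    apply Measurable.aemeasurable
    have heq : (Function.uncurry fun (u l : ℝ) => Set.indicator {l : ℝ | ENNReal.ofReal l < g u}
        (fun _ => (1 : ℝ≥0∞)) l) = fun p : ℝ × ℝ =>
        Set.indicator {p : ℝ × ℝ | ENNReal.ofReal p.2 < g p.1} (fun _ => (1 : ℝ≥0∞)) p := by
      ext p
      by_cases h : ENNReal.ofReal p.2 < g p.1 <;>
        simp [Function.uncurry, Set.indicator, h]
    rw [heq]
    exact (measurable_one.indicator
      (measurableSet_lt (ENNReal.measurable_ofReal.comp measurable_snd)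
        (hg.comp measurable_fst)))
  rw [step1, hswap]
  refine lintegral_congr fun l => ?_
  have hms : MeasurableSet {u : ℝ | ENNReal.ofReal l < g u} := hg measurableSet_Ioi
  have heq : ∀ u : ℝ, Set.indicator {l' : ℝ | ENNReal.ofReal l' < g u}
      (fun _ => (1 : ℝ≥0∞)) l = Set.indicator {u : ℝ | ENNReal.ofReal l < g u}
      (fun _ => (1 : ℝ≥0∞)) u := by
    intro u; by_cases h : ENNReal.ofReal l < g u <;> simp [Set.indicator, h]
  simp_rw [heq]
  rw [lintegral_indicator hms, setLIntegral_one]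

lemma part2_bound {α c σ : ℝ} (hα : -1 < α) (hc : 0 < c) (hc1 : c ≤ 1)
    (hσ0 : 0 < σ) (hσ1 : σ ≤ 1) :
    ∫⁻ u in Set.Ioo (c * (1 - σ)) c, ENNReal.ofReal (((c - u) / c) ^ α) ≤
      ENNReal.ofReal ((1 / (α + 1)) * σ ^ (α + 1)) := by
  set a := c * (1 - σ) with ha_def
  have hac : a < c := by nlinarith
  have hca : c - a = c * σ := by ring
  have hα1 : 0 < α + 1 := by linarith
  -- rewrite integrand on the set
  have hcongr : ∫⁻ u in Set.Ioo a c, ENNReal.ofReal (((c - u) / c) ^ α)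
      = ∫⁻ u in Set.Ioo a c, ENNReal.ofReal (c ^ (-α) * (c - u) ^ α) := by
    refine setLIntegral_congr_fun measurableSet_Ioo ?_
    intro u hu
    have h1 : (0:ℝ) ≤ c - u := by linarith [hu.2]
    dsimp only
    rw [Real.div_rpow h1 hc.le, Real.rpow_neg hc.le, div_eq_mul_inv, mul_comm]
  rw [hcongr]
  -- integrability of (c - u) ^ α on [a, c]
  have hii : IntervalIntegrable (fun u : ℝ => (c - u) ^ α) volume a c := by
    have h0 : IntervalIntegrable (fun t : ℝ => t ^ α) volume 0 (c - a) :=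
      intervalIntegral.intervalIntegrable_rpow' hα
    have := h0.comp_sub_left c
    simpa using this.symm
  have hii' : IntegrableOn (fun u : ℝ => (c - u) ^ α) (Set.Ioo a c) volume := by
    rw [intervalIntegrable_iff_integrableOn_Ioo_of_le hac.le] at hii
    exact hii
  have hnn : ∀ᵐ u ∂(volume.restrict (Set.Ioo a c)), 0 ≤ (c - u) ^ α := by
    refine (ae_restrict_iff' measurableSet_Ioo).2 (Filter.Eventually.of_forall ?_)
    intro u hu
    exact Real.rpow_nonneg (by linarith [hu.2]) _
  -- compute the integral
  have hval : ∫ u in Set.Ioo a c, (c - u) ^ α = (c * σ) ^ (α + 1) / (α + 1) := by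
    rw [← MeasureTheory.integral_Ioc_eq_integral_Ioo,
      ← intervalIntegral.integral_of_le hac.le,
      intervalIntegral.integral_comp_sub_left (fun t => t ^ α) c]
    simp only [sub_self]
    rw [integral_rpow (Or.inl hα), hca, Real.zero_rpow (ne_of_gt hα1), sub_zero]
  have hlint : ∫⁻ u in Set.Ioo a c, ENNReal.ofReal ((c - u) ^ α)
      = ENNReal.ofReal ((c * σ) ^ (α + 1) / (α + 1)) := by
    rw [← ofReal_integral_eq_lintegral_ofReal hii' hnn, hval]
  calc ∫⁻ u in Set.Ioo a c, ENNReal.ofReal (c ^ (-α) * (c - u) ^ α)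
      = ENNReal.ofReal (c ^ (-α)) * ∫⁻ u in Set.Ioo a c, ENNReal.ofReal ((c - u) ^ α) := by
        simp_rw [ENNReal.ofReal_mul (Real.rpow_nonneg hc.le _)]
        exact lintegral_const_mul' _ _ ENNReal.ofReal_ne_top
    _ = ENNReal.ofReal (c ^ (-α) * ((c * σ) ^ (α + 1) / (α + 1))) := by
        rw [hlint, ← ENNReal.ofReal_mul (Real.rpow_nonneg hc.le _)]
    _ ≤ ENNReal.ofReal ((1 / (α + 1)) * σ ^ (α + 1)) := by
        apply ENNReal.ofReal_le_ofReal
        rw [Real.mul_rpow hc.le hσ0.le]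
        have hkey : c ^ (-α) * c ^ (α + 1) = c := by
          rw [← Real.rpow_add hc, show -α + (α + 1) = 1 by ring, Real.rpow_one]
        calc c ^ (-α) * (c ^ (α + 1) * σ ^ (α + 1) / (α + 1))
            = (c ^ (-α) * c ^ (α + 1)) * σ ^ (α + 1) / (α + 1) := by ring
          _ = c * σ ^ (α + 1) / (α + 1) := by rw [hkey]
          _ ≤ 1 / (α + 1) * σ ^ (α + 1) := by
              rw [div_le_iff₀ hα1]  -- maybe easier direct
              calc c * σ ^ (α + 1) ≤ 1 * σ ^ (α + 1) := by
                    apply mul_le_mul_of_nonneg_right hc1 (Real.rpow_nonneg hσ0.le _)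
                _ = 1 / (α + 1) * σ ^ (α + 1) * (α + 1) := by field_simp

lemma key_set_estimate (n d : ℕ) (hn : 2 ≤ n) (hd : 1 ≤ d) (hdn : d ≤ n - 1)
    {c : ℝ} (hc : 0 < c) (hc1 : c ≤ 1) (S : Set ℝ) (hS : MeasurableSet S) :
    ∫⁻ u in S ∩ Set.Ioo 0 c, ENNReal.ofReal (((c - u) / c) ^ (((d : ℝ) - 2) / 2)) ≤
      ENNReal.ofReal 3 *
        (∫⁻ u in S ∩ Set.Ioo 0 c, ENNReal.ofReal (((c - u) / c) ^ (((n : ℝ) - 2) / 2)))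
          ^ ((d : ℝ) / (n : ℝ)) := by
  have hdn' : d < n := lt_of_le_of_lt hdn (Nat.sub_lt (by omega) one_pos)
  have hdln : (d : ℝ) < (n : ℝ) := by exact_mod_cast hdn'
  have hd1 : (1 : ℝ) ≤ (d : ℝ) := by exact_mod_cast hd
  have hn2 : (2 : ℝ) ≤ (n : ℝ) := by exact_mod_cast hn
  have hn0 : (0 : ℝ) < (n : ℝ) := by linarith
  set α : ℝ := ((d : ℝ) - 2) / 2 with hα_def
  set β : ℝ := ((n : ℝ) - 2) / 2 with hβ_def
  have hα : -1 < α := by rw [hα_def]; linarith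
  have hα1 : α + 1 = (d : ℝ) / 2 := by rw [hα_def]; ring
  have hβ0 : 0 ≤ β := by rw [hβ_def]; linarith
  have hαβ : α - β = ((d : ℝ) - (n : ℝ)) / 2 := by rw [hα_def, hβ_def]; ring
  have hαβ0 : α - β ≤ 0 := by rw [hαβ]; linarith
  set E := S ∩ Set.Ioo 0 c with hE_def
  have hEm : MeasurableSet E := hS.inter measurableSet_Ioo
  have hEsub : E ⊆ Set.Ioo 0 c := Set.inter_subset_right
  have hmesτ : Measurable fun u : ℝ => (c - u) / c :=
    (measurable_const.sub measurable_id).div_const c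
  have hmesβ : Measurable fun u : ℝ => ENNReal.ofReal (((c - u) / c) ^ β) :=
    ENNReal.measurable_ofReal.comp (hmesτ.pow_const β)
  set M := ∫⁻ u in E, ENNReal.ofReal (((c - u) / c) ^ β) with hM_def
  have hM_le : M ≤ ENNReal.ofReal c := by
    calc M ≤ ∫⁻ _ in E, 1 := by
          refine setLIntegral_mono measurable_const fun u hu => ?_
          have hu' := hEsub hu
          refine ENNReal.ofReal_le_of_le_toReal ?_
          rw [ENNReal.toReal_one]
          apply Real.rpow_le_one (div_nonneg (by linarith [hu'.2]) hc.le) _ hβ0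
          rw [div_le_one hc]; linarith [hu'.1]
      _ = volume E := by rw [setLIntegral_one]
      _ ≤ volume (Set.Ioo 0 c) := measure_mono hEsub
      _ = ENNReal.ofReal c := by rw [Real.volume_Ioo, sub_zero]
  have hM_le1 : M ≤ 1 := le_trans hM_le (by simpa using ENNReal.ofReal_le_ofReal hc1)
  have hM_top : M ≠ ∞ := ne_top_of_le_ne_top ENNReal.one_ne_top hM_le1
  rcases eq_or_ne M 0 with hM0 | hM0
  · -- E is null
    have hae := (lintegral_eq_zero_iff hmesβ).1 hM0
    have hnull : volume E = 0 := by
      have hset : MeasurableSet {u : ℝ | ENNReal.ofReal (((c - u) / c) ^ β) ≠ 0} :=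
        (hmesβ (measurableSet_singleton 0)).compl
      have h0 : volume.restrict E {u : ℝ | ENNReal.ofReal (((c - u) / c) ^ β) ≠ 0} = 0 := hae
      rw [Measure.restrict_apply hset] at h0
      have hsub : E ⊆ {u : ℝ | ENNReal.ofReal (((c - u) / c) ^ β) ≠ 0} := by
        intro u hu
        have hu' := hEsub hu
        have hτ : 0 < (c - u) / c := by
          apply div_pos _ hc; linarith [hu'.2]
        simp only [Set.mem_setOf_eq, ne_eq, ENNReal.ofReal_eq_zero, not_le]
        exact Real.rpow_pos_of_pos hτ _
      calc volume E = volume ({u : ℝ | ENNReal.ofReal (((c - u) / c) ^ β) ≠ 0} ∩ E) := by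
            rw [Set.inter_eq_right.mpr hsub]
        _ = 0 := h0
    rw [setLIntegral_measure_zero _ _ hnull]
    exact zero_le
  · -- main case
    have hmr0 : 0 < M.toReal := ENNReal.toReal_pos hM0 hM_top
    set mr := M.toReal with hmr_def
    have hmr1 : mr ≤ 1 := by
      have := ENNReal.toReal_mono ENNReal.one_ne_top hM_le1
      simpa using this
    set σ : ℝ := mr ^ ((2 : ℝ) / (n : ℝ)) with hσ_def
    have hσ0 : 0 < σ := Real.rpow_pos_of_pos hmr0 _
    have hσ1 : σ ≤ 1 := Real.rpow_le_one hmr0.le hmr1 (by positivity)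
    set a := c * (1 - σ) with ha_def
    have hsplit : E ⊆ (E ∩ Set.Iic a) ∪ Set.Ioo a c := by
      intro u hu
      rcases le_or_gt u a with h | h
      · exact Or.inl ⟨hu, h⟩
      · exact Or.inr ⟨h, (hEsub hu).2⟩
    have part1 : ∫⁻ u in E ∩ Set.Iic a, ENNReal.ofReal (((c - u) / c) ^ α) ≤
        ENNReal.ofReal (σ ^ (α - β)) * M := by
      calc ∫⁻ u in E ∩ Set.Iic a, ENNReal.ofReal (((c - u) / c) ^ α)
          ≤ ∫⁻ u in E ∩ Set.Iic a,
            ENNReal.ofReal (σ ^ (α - β)) * ENNReal.ofReal (((c - u) / c) ^ β) := by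
            refine setLIntegral_mono (measurable_const.mul hmesβ) fun u hu => ?_
            have hu' := hEsub hu.1
            have hua : u ≤ a := hu.2
            have hστ : σ ≤ (c - u) / c := by
              rw [le_div_iff₀ hc]; rw [ha_def] at hua; nlinarith
            have hτ0 : 0 < (c - u) / c := lt_of_lt_of_le hσ0 hστ
            rw [← ENNReal.ofReal_mul (Real.rpow_nonneg hσ0.le _)]
            apply ENNReal.ofReal_le_ofReal
            calc ((c - u) / c) ^ α = ((c - u) / c) ^ (α - β) * ((c - u) / c) ^ β := by
                  rw [← Real.rpow_add hτ0, sub_add_cancel]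
              _ ≤ σ ^ (α - β) * ((c - u) / c) ^ β := by
                  apply mul_le_mul_of_nonneg_right
                    (Real.rpow_le_rpow_of_nonpos hσ0 hστ hαβ0)
                    (Real.rpow_nonneg (by positivity) _)
        _ = ENNReal.ofReal (σ ^ (α - β)) *
            ∫⁻ u in E ∩ Set.Iic a, ENNReal.ofReal (((c - u) / c) ^ β) :=
            lintegral_const_mul' _ _ ENNReal.ofReal_ne_top
        _ ≤ ENNReal.ofReal (σ ^ (α - β)) * M := by
            exact mul_le_mul_right (lintegral_mono_set Set.inter_subset_left) _
    have part2 : ∫⁻ u in Set.Ioo a c, ENNReal.ofReal (((c - u) / c) ^ α) ≤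
        ENNReal.ofReal ((1 / (α + 1)) * σ ^ (α + 1)) :=
      part2_bound hα hc hc1 hσ0 hσ1
    -- combine
    have hMr : M = ENNReal.ofReal mr := (ENNReal.ofReal_toReal hM_top).symm
    have e1 : σ ^ (α - β) * mr = mr ^ ((d : ℝ) / (n : ℝ)) := by
      rw [hσ_def, ← Real.rpow_mul hmr0.le]
      nth_rewrite 2 [show mr = mr ^ (1 : ℝ) by rw [Real.rpow_one]]
      rw [← Real.rpow_add hmr0]
      congr 1
      rw [hαβ]; field_simp; ring
    have e2 : (1 / (α + 1)) * σ ^ (α + 1) ≤ 2 * mr ^ ((d : ℝ) / (n : ℝ)) := by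
      have hσα : σ ^ (α + 1) = mr ^ ((d : ℝ) / (n : ℝ)) := by
        rw [hσ_def, ← Real.rpow_mul hmr0.le]
        congr 1
        rw [hα1]; field_simp
      rw [hσα]
      apply mul_le_mul_of_nonneg_right _ (Real.rpow_nonneg hmr0.le _)
      rw [hα1]
      rw [div_le_iff₀ (by linarith : (0:ℝ) < (d:ℝ)/2)]
      linarith
    calc ∫⁻ u in E, ENNReal.ofReal (((c - u) / c) ^ α)
        ≤ ∫⁻ u in (E ∩ Set.Iic a) ∪ Set.Ioo a c, ENNReal.ofReal (((c - u) / c) ^ α) :=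
          lintegral_mono_set hsplit
      _ ≤ (∫⁻ u in E ∩ Set.Iic a, ENNReal.ofReal (((c - u) / c) ^ α)) +
          ∫⁻ u in Set.Ioo a c, ENNReal.ofReal (((c - u) / c) ^ α) :=
          lintegral_union_le _ _ _
      _ ≤ ENNReal.ofReal (σ ^ (α - β)) * M + ENNReal.ofReal ((1 / (α + 1)) * σ ^ (α + 1)) :=
          add_le_add part1 part2
      _ ≤ ENNReal.ofReal 3 * M ^ ((d : ℝ) / (n : ℝ)) := by
          rw [hMr, ← ENNReal.ofReal_mul (Real.rpow_nonneg hσ0.le _), e1,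
            ← ENNReal.ofReal_add (Real.rpow_nonneg hmr0.le _)
              (mul_nonneg (by rw [hα1]; positivity) (Real.rpow_nonneg hσ0.le _)),
            ENNReal.ofReal_rpow_of_pos hmr0,
            ← ENNReal.ofReal_mul (by norm_num)]
          apply ENNReal.ofReal_le_ofReal
          nlinarith [Real.rpow_nonneg hmr0.le ((d : ℝ) / (n : ℝ)), e2,
            Real.rpow_pos_of_pos hmr0 ((d : ℝ) / (n : ℝ))]

lemma ptwise_A (d : ℕ) {c u : ℝ} (hc : 0 < c) (hu : u ∈ Set.Ioo 0 c) :
    c ^ ((2 : ℝ) - d) * (c ^ 2 - u ^ 2) ^ (((d : ℝ) - 2) / 2) ≤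
      2 ^ d * (((c - u) / c) ^ (((d : ℝ) - 2) / 2)) := by
  set α : ℝ := ((d : ℝ) - 2) / 2 with hα_def
  obtain ⟨hu0, huc⟩ := hu
  have hcu : 0 < c - u := by linarith
  have hccu : 0 < c * (c - u) := by positivity
  have h2 : c * (c - u) ≤ c ^ 2 - u ^ 2 := by nlinarith
  have h3 : c ^ 2 - u ^ 2 ≤ 2 * (c * (c - u)) := by nlinarith
  have hpos : 0 < c ^ 2 - u ^ 2 := by nlinarith
  have hstep : (c ^ 2 - u ^ 2) ^ α ≤ 2 ^ d * (c * (c - u)) ^ α := by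
    rcases le_or_gt 0 α with h | h
    · calc (c ^ 2 - u ^ 2) ^ α ≤ (2 * (c * (c - u))) ^ α :=
            Real.rpow_le_rpow hpos.le h3 h
        _ = 2 ^ α * (c * (c - u)) ^ α := Real.mul_rpow (by norm_num) hccu.le
        _ ≤ 2 ^ ((d : ℝ)) * (c * (c - u)) ^ α := by
            apply mul_le_mul_of_nonneg_right
              (Real.rpow_le_rpow_of_exponent_le one_le_two ?_)
              (Real.rpow_nonneg hccu.le _)
            rw [hα_def]
            have : (0 : ℝ) ≤ (d : ℝ) := Nat.cast_nonneg d
            linarith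
        _ = 2 ^ d * (c * (c - u)) ^ α := by rw [Real.rpow_natCast]
    · calc (c ^ 2 - u ^ 2) ^ α ≤ (c * (c - u)) ^ α :=
            Real.rpow_le_rpow_of_nonpos hccu h2 h.le
        _ ≤ 2 ^ d * (c * (c - u)) ^ α := by
            apply le_mul_of_one_le_left (Real.rpow_nonneg hccu.le _)
            exact one_le_pow₀ one_le_two
  calc c ^ ((2 : ℝ) - d) * (c ^ 2 - u ^ 2) ^ α
      ≤ c ^ ((2 : ℝ) - d) * (2 ^ d * (c * (c - u)) ^ α) :=
        mul_le_mul_of_nonneg_left hstep (Real.rpow_nonneg hc.le _)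
    _ = 2 ^ d * (c ^ ((2 : ℝ) - d) * (c ^ α * (c - u) ^ α)) := by
        rw [Real.mul_rpow hc.le hcu.le]; ring
    _ = 2 ^ d * (((c - u) / c) ^ α) := by
        congr 1
        rw [Real.div_rpow hcu.le hc.le, div_eq_mul_inv, ← Real.rpow_neg hc.le]
        have hkey : c ^ ((2 : ℝ) - d) * c ^ α = c ^ (-α) := by
          rw [← Real.rpow_add hc]; congr 1; rw [hα_def]; ring
        calc c ^ ((2 : ℝ) - d) * (c ^ α * (c - u) ^ α)
            = (c ^ ((2 : ℝ) - d) * c ^ α) * (c - u) ^ α := by ring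
          _ = c ^ (-α) * (c - u) ^ α := by rw [hkey]
          _ = (c - u) ^ α * c ^ (-α) := by ring

lemma ptwise_B (n : ℕ) (hn : 2 ≤ n) {c u : ℝ} (hc : 0 < c) (hc1 : c ≤ 1)
    (hu : u ∈ Set.Ioo 0 c) :
    ((c - u) / c) ^ (((n : ℝ) - 2) / 2) ≤ (1 - u ^ 2) ^ (((n : ℝ) - 2) / 2) := by
  have hn2 : (2 : ℝ) ≤ (n : ℝ) := by exact_mod_cast hn
  obtain ⟨hu0, huc⟩ := hu
  have hbase : (c - u) / c ≤ 1 - u ^ 2 := by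
    rw [div_le_iff₀ hc]; nlinarith
  exact Real.rpow_le_rpow (div_nonneg (by linarith) hc.le) hbase (by linarith)

/-- The Lorentz `L^{p,1}` norm of `f` with respect to the measure `μ`:
`‖f‖_{L^{p,1}(μ)} = p ∫_0^∞ μ({x : f x > λ})^{1/p} dλ`. -/
noncomputable def lorentzNorm (μ : Measure ℝ) (p : ℝ) (f : ℝ → ℝ≥0∞) : ℝ≥0∞ :=
  ENNReal.ofReal p *
    ∫⁻ l in Set.Ioi (0 : ℝ), (μ {t | ENNReal.ofReal l < f t}) ^ (1 / p)

/-- Endpoint estimate for the Abel transform associated with the `d`-dimensional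
totally geodesic Radon transform of even radial functions on `Sⁿ`: for `n ≥ 2`,
`1 ≤ d ≤ n−1` there is `C > 0` such that for all measurable `g : (0,1) → [0,∞]`,
`sup_{θ ∈ (0,π/2)} (cos θ)^{2−d} ∫_0^{cos θ} g(u)(cos²θ − u²)^{(d−2)/2} du
  ≤ C ‖g‖_{L^{n/d,1}((0,1), (1−u²)^{(n−2)/2} du)}`. -/
theorem abel_sphere_endpoint (n d : ℕ) (hn : 2 ≤ n) (hd : 1 ≤ d) (hdn : d ≤ n - 1) :
    ∃ C : ℝ, 0 < C ∧ ∀ g : ℝ → ℝ≥0∞, Measurable g →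
      ∀ θ : ℝ, 0 < θ → θ < Real.pi / 2 →
        ENNReal.ofReal (Real.cos θ ^ ((2 : ℝ) - d)) *
            (∫⁻ u in Set.Ioo 0 (Real.cos θ),
              g u * ENNReal.ofReal ((Real.cos θ ^ 2 - u ^ 2) ^ (((d : ℝ) - 2) / 2))) ≤
          ENNReal.ofReal C *
            lorentzNorm
              ((volume.restrict (Set.Ioo (0 : ℝ) 1)).withDensity
                (fun u => ENNReal.ofReal ((1 - u ^ 2) ^ (((n : ℝ) - 2) / 2))))
              ((n : ℝ) / d) g := by
  have hd0 : (0 : ℝ) < (d : ℝ) := by exact_mod_cast hd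
  have hn0 : (0 : ℝ) < (n : ℝ) := by positivity
  have hn1 : (1 : ℝ) ≤ (n : ℝ) := by exact_mod_cast (by omega : 1 ≤ n)
  refine ⟨3 * 2 ^ d * d, by positivity, ?_⟩
  intro g hg θ hθ0 hθπ
  set c := Real.cos θ with hc_def
  have hc : 0 < c := Real.cos_pos_of_mem_Ioo ⟨by linarith [Real.pi_pos], hθπ⟩
  have hc1 : c < 1 := by
    have := Real.cos_lt_cos_of_nonneg_of_le_pi le_rfl
      (by linarith [Real.pi_pos] : θ ≤ Real.pi) hθ0
    rwa [Real.cos_zero] at this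
  set α : ℝ := ((d : ℝ) - 2) / 2 with hα_def
  set β : ℝ := ((n : ℝ) - 2) / 2 with hβ_def
  set μs := (volume.restrict (Set.Ioo (0 : ℝ) 1)).withDensity
      (fun u => ENNReal.ofReal ((1 - u ^ 2) ^ β)) with hμs_def
  set I := ∫⁻ l in Set.Ioi (0 : ℝ),
      (μs {t | ENNReal.ofReal l < g t}) ^ ((d : ℝ) / (n : ℝ)) with hI_def
  have hmesτα : Measurable fun u : ℝ => ENNReal.ofReal (((c - u) / c) ^ α) :=
    ENNReal.measurable_ofReal.comp
      (((measurable_const.sub measurable_id).div_const c).pow_const α)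
  have hmesτβ : Measurable fun u : ℝ => ENNReal.ofReal (((c - u) / c) ^ β) :=
    ENNReal.measurable_ofReal.comp
      (((measurable_const.sub measurable_id).div_const c).pow_const β)
  have hmesρ : Measurable fun u : ℝ => ENNReal.ofReal ((1 - u ^ 2) ^ β) :=
    ENNReal.measurable_ofReal.comp
      ((measurable_const.sub (measurable_id.pow_const 2)).pow_const β)
  -- Step 1
  have h1 : ENNReal.ofReal (c ^ ((2 : ℝ) - d)) *
      (∫⁻ u in Set.Ioo 0 c, g u * ENNReal.ofReal ((c ^ 2 - u ^ 2) ^ α)) ≤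
      ENNReal.ofReal ((2 : ℝ) ^ d) *
      ∫⁻ u in Set.Ioo 0 c, g u * ENNReal.ofReal (((c - u) / c) ^ α) := by
    rw [← lintegral_const_mul' _ _ ENNReal.ofReal_ne_top,
      ← lintegral_const_mul' _ _ ENNReal.ofReal_ne_top]
    refine setLIntegral_mono
      (measurable_const.mul (hg.mul hmesτα)) fun u hu => ?_
    calc ENNReal.ofReal (c ^ ((2 : ℝ) - d)) * (g u * ENNReal.ofReal ((c ^ 2 - u ^ 2) ^ α))
        = g u * (ENNReal.ofReal (c ^ ((2 : ℝ) - d)) * ENNReal.ofReal ((c ^ 2 - u ^ 2) ^ α)) := by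
          ring
      _ ≤ g u * (ENNReal.ofReal ((2 : ℝ) ^ d) * ENNReal.ofReal (((c - u) / c) ^ α)) := by
          apply mul_le_mul_right
          rw [← ENNReal.ofReal_mul (Real.rpow_nonneg hc.le _),
            ← ENNReal.ofReal_mul (by positivity)]
          exact ENNReal.ofReal_le_ofReal (ptwise_A d hc hu)
      _ = ENNReal.ofReal ((2 : ℝ) ^ d) * (g u * ENNReal.ofReal (((c - u) / c) ^ α)) := by
          ring
  -- Step 2: layer cake
  set ν := (volume.restrict (Set.Ioo (0 : ℝ) c)).withDensity
      (fun u => ENNReal.ofReal (((c - u) / c) ^ α)) with hν_def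
  have hν_eq : ∫⁻ u in Set.Ioo (0 : ℝ) c, g u * ENNReal.ofReal (((c - u) / c) ^ α)
      = ∫⁻ u, g u ∂ν := by
    rw [hν_def, lintegral_withDensity_eq_lintegral_mul _ hmesτα hg]
    exact lintegral_congr fun u => (mul_comm _ _)
  have h2 : ∫⁻ u, g u ∂ν = ∫⁻ l in Set.Ioi (0 : ℝ), ν {u | ENNReal.ofReal l < g u} :=
    layercake_ennreal ν g hg
  -- Step 3: per-level set estimate
  have h3 : ∀ l : ℝ, ν {u | ENNReal.ofReal l < g u} ≤
      ENNReal.ofReal 3 * (μs {t | ENNReal.ofReal l < g t}) ^ ((d : ℝ) / (n : ℝ)) := by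
    intro l
    have hSl : MeasurableSet {u : ℝ | ENNReal.ofReal l < g u} := hg measurableSet_Ioi
    rw [hν_def, withDensity_apply _ hSl, Measure.restrict_restrict hSl]
    have hμsl : μs {t | ENNReal.ofReal l < g t} =
        ∫⁻ u in {t : ℝ | ENNReal.ofReal l < g t} ∩ Set.Ioo 0 1,
          ENNReal.ofReal ((1 - u ^ 2) ^ β) := by
      rw [hμs_def, withDensity_apply _ hSl, Measure.restrict_restrict hSl]
    rw [hμsl]
    calc ∫⁻ u in {u : ℝ | ENNReal.ofReal l < g u} ∩ Set.Ioo 0 c,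
          ENNReal.ofReal (((c - u) / c) ^ α)
        ≤ ENNReal.ofReal 3 * (∫⁻ u in {u : ℝ | ENNReal.ofReal l < g u} ∩ Set.Ioo 0 c,
            ENNReal.ofReal (((c - u) / c) ^ β)) ^ ((d : ℝ) / (n : ℝ)) :=
          key_set_estimate n d hn hd hdn hc hc1.le _ hSl
      _ ≤ ENNReal.ofReal 3 * (∫⁻ u in {u : ℝ | ENNReal.ofReal l < g u} ∩ Set.Ioo 0 1,
            ENNReal.ofReal ((1 - u ^ 2) ^ β)) ^ ((d : ℝ) / (n : ℝ)) := by
          apply mul_le_mul_right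
          apply ENNReal.rpow_le_rpow _ (by positivity)
          calc ∫⁻ u in {u : ℝ | ENNReal.ofReal l < g u} ∩ Set.Ioo 0 c,
                ENNReal.ofReal (((c - u) / c) ^ β)
              ≤ ∫⁻ u in {u : ℝ | ENNReal.ofReal l < g u} ∩ Set.Ioo 0 c,
                ENNReal.ofReal ((1 - u ^ 2) ^ β) :=
                setLIntegral_mono hmesρ fun u hu =>
                  ENNReal.ofReal_le_ofReal (ptwise_B n hn hc hc1.le hu.2)
            _ ≤ _ := lintegral_mono_set
                (Set.inter_subset_inter_right _ (Set.Ioo_subset_Ioo_right hc1.le))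
  -- Assemble
  calc ENNReal.ofReal (c ^ ((2 : ℝ) - d)) *
        (∫⁻ u in Set.Ioo 0 c, g u * ENNReal.ofReal ((c ^ 2 - u ^ 2) ^ α))
      ≤ ENNReal.ofReal ((2 : ℝ) ^ d) *
        ∫⁻ u in Set.Ioo 0 c, g u * ENNReal.ofReal (((c - u) / c) ^ α) := h1
    _ = ENNReal.ofReal ((2 : ℝ) ^ d) *
        ∫⁻ l in Set.Ioi (0 : ℝ), ν {u | ENNReal.ofReal l < g u} := by rw [hν_eq, h2]
    _ ≤ ENNReal.ofReal ((2 : ℝ) ^ d) * ∫⁻ l in Set.Ioi (0 : ℝ),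
        ENNReal.ofReal 3 * (μs {t | ENNReal.ofReal l < g t}) ^ ((d : ℝ) / (n : ℝ)) :=
        mul_le_mul_right (lintegral_mono fun l => h3 l) _
    _ = ENNReal.ofReal ((2 : ℝ) ^ d) * (ENNReal.ofReal 3 * I) := by
        rw [hI_def, lintegral_const_mul' _ _ ENNReal.ofReal_ne_top]
    _ ≤ ENNReal.ofReal (3 * 2 ^ d * d) * lorentzNorm μs ((n : ℝ) / d) g := by
        rw [lorentzNorm]
        have h1p : 1 / ((n : ℝ) / (d : ℝ)) = (d : ℝ) / (n : ℝ) := one_div_div _ _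
        rw [h1p, ← hI_def, ← mul_assoc, ← mul_assoc,
          ← ENNReal.ofReal_mul (by positivity), ← ENNReal.ofReal_mul (by positivity)]
        apply mul_le_mul_left
        apply ENNReal.ofReal_le_ofReal
        have hdn' : 3 * 2 ^ d * (d : ℝ) * ((n : ℝ) / (d : ℝ)) = 3 * 2 ^ d * (n : ℝ) := by
          field_simp
        rw [hdn']
        nlinarith [pow_pos (by norm_num : (0:ℝ) < 2) d]
end

section
/- Let n ≥ 2 and 1 ≤ d ≤ n−1 be integers and let 1 ≤ p < ∞. There is no constant C > 0 such that for all a ∈ (0,1), sup_{θ ∈ (0,π/2)} (cos θ)^{1−d} ∫_0^{cos θ} χ_{(0,a)}(u) (cos²θ − u²)^{(d−2)/2} du ≤ C (∫_0^1 χ_{(0,a)}(u) (1−u²)^{(n−2)/2} du)^{1/p}. Consequently the spherical Abel transform A_d⁺ is not bounded from L^{p,1}(Sⁿ) to L^∞ on radial functions for any p < ∞. -/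
open MeasureTheory Set Real
open scoped ENNReal

set_option maxHeartbeats 1000000 in
/-- The spherical Abel transform `A_d⁺` is not bounded from `L^{p,1}(Sⁿ)` (radial) to
`L^∞` for any `p < ∞`: there is no constant `C > 0` such that for all `a ∈ (0,1)`,
`sup_{θ ∈ (0,π/2)} (cos θ)^{1−d} ∫_0^{cos θ} χ_{(0,a)}(u)(cos²θ − u²)^{(d−2)/2} du
  ≤ C (∫_0^1 χ_{(0,a)}(u)(1−u²)^{(n−2)/2} du)^{1/p}`. -/
theorem abel_sphere_no_endpoint (n d : ℕ) (hn : 2 ≤ n) (hd : 1 ≤ d) (hdn : d ≤ n - 1)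
    (p : ℝ) (hp1 : 1 ≤ p) :
    ¬ ∃ C : ℝ, 0 < C ∧ ∀ a : ℝ, 0 < a → a < 1 →
      ∀ θ : ℝ, 0 < θ → θ < Real.pi / 2 →
        ENNReal.ofReal (Real.cos θ ^ ((1 : ℝ) - d)) *
            (∫⁻ u in Set.Ioo 0 a ∩ Set.Ioo 0 (Real.cos θ),
              ENNReal.ofReal ((Real.cos θ ^ 2 - u ^ 2) ^ (((d : ℝ) - 2) / 2))) ≤
          ENNReal.ofReal C *
            (∫⁻ u in Set.Ioo (0 : ℝ) a,
              ENNReal.ofReal ((1 - u ^ 2) ^ (((n : ℝ) - 2) / 2))) ^ (1 / p) := by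
  rintro ⟨C, hC, h⟩
  have hp0 : (0 : ℝ) < p := lt_of_lt_of_le one_pos hp1
  set e : ℝ := ((d : ℝ) - 2) / 2 with he
  have hm0 : (0 : ℝ) < min ((3/4 : ℝ) ^ e) 1 :=
    lt_min (Real.rpow_pos_of_pos (by norm_num) e) one_pos
  set m : ℝ := min ((3/4 : ℝ) ^ e) 1 with hmdef
  set K : ℝ := m / 2 with hKdef
  have hK0 : (0 : ℝ) < K := by positivity
  set a : ℝ := min (1/2) ((K / (2 * C)) ^ p) with hadef
  have ha0 : 0 < a := lt_min (by norm_num) (Real.rpow_pos_of_pos (by positivity) p)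
  have ha1 : a < 1 := lt_of_le_of_lt (min_le_left _ _) (by norm_num)
  set θ : ℝ := Real.arccos (a / 2) with hθdef
  have hc : Real.cos θ = a / 2 := Real.cos_arccos (by linarith) (by linarith)
  have hθ1 : 0 < θ := Real.arccos_pos.2 (by linarith)
  have hθ2 : θ < Real.pi / 2 := Real.arccos_lt_pi_div_two.2 (by linarith)
  have hc0 : 0 < Real.cos θ := by rw [hc]; linarith
  have hca : Real.cos θ < a := by rw [hc]; linarith
  set c : ℝ := Real.cos θ with hcdef
  -- the intersection is just `Ioo 0 c`
  have hinter : Set.Ioo (0:ℝ) a ∩ Set.Ioo 0 c = Set.Ioo 0 c := by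
    rw [Set.Ioo_inter_Ioo]
    simp [min_eq_right hca.le]
  -- pointwise lower bound on `Ioo 0 (c/2)`
  have hbound : ∀ u ∈ Set.Ioo (0:ℝ) (c/2),
      ENNReal.ofReal (m * (c ^ 2) ^ e) ≤ ENNReal.ofReal ((c ^ 2 - u ^ 2) ^ e) := by
    intro u hu
    apply ENNReal.ofReal_le_ofReal
    have hu0 : 0 < u := hu.1
    have hu2 : u < c / 2 := hu.2
    have h1 : (0:ℝ) < c ^ 2 - u ^ 2 := by nlinarith
    have ht : (c ^ 2 - u ^ 2) = c ^ 2 * ((c ^ 2 - u ^ 2) / c ^ 2) := by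
      field_simp
    have htpos : (0:ℝ) < (c ^ 2 - u ^ 2) / c ^ 2 := by positivity
    have ht34 : (3/4 : ℝ) ≤ (c ^ 2 - u ^ 2) / c ^ 2 := by
      rw [le_div_iff₀ (by positivity)]; nlinarith
    have ht1 : (c ^ 2 - u ^ 2) / c ^ 2 ≤ 1 := by
      rw [div_le_one (by positivity)]; nlinarith [sq_nonneg u]
    rw [ht, Real.mul_rpow (by positivity) htpos.le, mul_comm m]
    have hm : m ≤ ((c ^ 2 - u ^ 2) / c ^ 2) ^ e := by
      rcases le_or_gt 0 e with he0 | he0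
      · exact le_trans (min_le_left _ _) (Real.rpow_le_rpow (by norm_num) ht34 he0)
      · exact le_trans (min_le_right _ _)
          (Real.one_le_rpow_of_pos_of_le_one_of_nonpos htpos ht1 he0.le)
    have : (0:ℝ) ≤ (c ^ 2) ^ e := (Real.rpow_pos_of_pos (by positivity) e).le
    exact mul_le_mul_of_nonneg_left hm this
  -- lower bound on the integral over `Ioo 0 c`
  have hint : ENNReal.ofReal (m * (c ^ 2) ^ e) * ENNReal.ofReal (c / 2) ≤
      ∫⁻ u in Set.Ioo (0:ℝ) c, ENNReal.ofReal ((c ^ 2 - u ^ 2) ^ e) := by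
    calc ENNReal.ofReal (m * (c ^ 2) ^ e) * ENNReal.ofReal (c / 2)
        = ∫⁻ _ in Set.Ioo (0:ℝ) (c/2), ENNReal.ofReal (m * (c ^ 2) ^ e) := by
          rw [setLIntegral_const, Real.volume_Ioo, sub_zero]
      _ ≤ ∫⁻ u in Set.Ioo (0:ℝ) (c/2), ENNReal.ofReal ((c ^ 2 - u ^ 2) ^ e) :=
          setLIntegral_mono' measurableSet_Ioo hbound
      _ ≤ ∫⁻ u in Set.Ioo (0:ℝ) c, ENNReal.ofReal ((c ^ 2 - u ^ 2) ^ e) :=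
          lintegral_mono_set (Set.Ioo_subset_Ioo_right (by linarith))
  -- the product of the constants is exactly K
  have harith : c ^ ((1:ℝ) - d) * (m * (c ^ 2) ^ e) * (c / 2) = K := by
    have h2 : ((c ^ 2 : ℝ)) ^ e = c ^ ((d:ℝ) - 2) := by
      rw [← Real.rpow_natCast c 2, ← Real.rpow_mul hc0.le]
      norm_num [he]
      ring_nf
    have h3 : c ^ ((1:ℝ) - d) * c ^ ((d:ℝ) - 2) * c ^ (1:ℝ) = 1 := by
      rw [← Real.rpow_add hc0, ← Real.rpow_add hc0]
      norm_num
    rw [Real.rpow_one] at h3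
    rw [h2, hKdef]
    nlinarith [h3]
  -- LHS lower bound
  have hLHS : ENNReal.ofReal K ≤
      ENNReal.ofReal (c ^ ((1 : ℝ) - d)) *
        ∫⁻ u in Set.Ioo 0 a ∩ Set.Ioo 0 c, ENNReal.ofReal ((c ^ 2 - u ^ 2) ^ e) := by
    rw [hinter]
    calc ENNReal.ofReal K
        = ENNReal.ofReal (c ^ ((1:ℝ) - d)) *
            (ENNReal.ofReal (m * (c ^ 2) ^ e) * ENNReal.ofReal (c / 2)) := by
          rw [← ENNReal.ofReal_mul (by positivity), ← ENNReal.ofReal_mul (by positivity),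
            ← mul_assoc, harith]
      _ ≤ _ := mul_le_mul_right hint _
  -- RHS upper bound
  have hIa : (∫⁻ u in Set.Ioo (0:ℝ) a,
      ENNReal.ofReal ((1 - u ^ 2) ^ (((n : ℝ) - 2) / 2))) ≤ ENNReal.ofReal a := by
    have hn2 : (0:ℝ) ≤ ((n : ℝ) - 2) / 2 := by
      have : (2:ℝ) ≤ n := by exact_mod_cast hn
      linarith
    calc (∫⁻ u in Set.Ioo (0:ℝ) a, ENNReal.ofReal ((1 - u ^ 2) ^ (((n : ℝ) - 2) / 2)))
        ≤ ∫⁻ _ in Set.Ioo (0:ℝ) a, 1 := by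
          apply setLIntegral_mono' measurableSet_Ioo
          intro u hu
          rw [← ENNReal.ofReal_one]
          apply ENNReal.ofReal_le_ofReal
          apply Real.rpow_le_one _ _ hn2
          · nlinarith [hu.1, hu.2]
          · nlinarith [sq_nonneg u]
      _ = ENNReal.ofReal a := by
          rw [setLIntegral_const, one_mul, Real.volume_Ioo, sub_zero]
  have hap : a ^ (1/p) ≤ K / (2 * C) := by
    have hmin : a ≤ (K / (2 * C)) ^ p := min_le_right _ _
    calc a ^ (1/p) ≤ ((K / (2 * C)) ^ p) ^ (1/p) :=
          Real.rpow_le_rpow ha0.le hmin (by positivity)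
      _ = K / (2 * C) := by
          rw [← Real.rpow_mul (by positivity), mul_one_div, div_self hp0.ne', Real.rpow_one]
  have hRHS : ENNReal.ofReal C *
      (∫⁻ u in Set.Ioo (0:ℝ) a,
        ENNReal.ofReal ((1 - u ^ 2) ^ (((n : ℝ) - 2) / 2))) ^ (1/p) ≤
      ENNReal.ofReal (K / 2) := by
    calc ENNReal.ofReal C *
        (∫⁻ u in Set.Ioo (0:ℝ) a,
          ENNReal.ofReal ((1 - u ^ 2) ^ (((n : ℝ) - 2) / 2))) ^ (1/p)
        ≤ ENNReal.ofReal C * (ENNReal.ofReal a) ^ (1/p) := by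
          exact mul_le_mul_right (ENNReal.rpow_le_rpow hIa (by positivity)) _
      _ = ENNReal.ofReal (C * a ^ (1/p)) := by
          rw [ENNReal.ofReal_rpow_of_pos ha0, ← ENNReal.ofReal_mul hC.le]
      _ ≤ ENNReal.ofReal (K / 2) := by
          apply ENNReal.ofReal_le_ofReal
          have : C * a ^ (1/p) ≤ C * (K / (2 * C)) := by
            exact mul_le_mul_of_nonneg_left hap hC.le
          calc C * a ^ (1/p) ≤ C * (K / (2 * C)) := this
            _ = K / 2 := by field_simp
  have hfinal : ENNReal.ofReal K ≤ ENNReal.ofReal (K / 2) :=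
    le_trans hLHS (le_trans (h a ha0 ha1 θ hθ1 hθ2) hRHS)
  rw [ENNReal.ofReal_le_ofReal_iff (by positivity)] at hfinal
  linarith
end
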